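/- arXiv:1312.4465 — 9 statements merged into one kernel-verified Lean document; each statement's English description precedes it below -/
import Mathlib

section
/- For every real x ≥ 1, the series f₁(x) := Σ_{r=1}^∞ x^{1-2r}/(2r(2r-1)) converges and equals (1/2)[x·log(1 - x^{-2}) + log((1 + x^{-1})/(1 - x^{-1}))] for x > 1. -/
set_option maxHeartbeats 1000000

theorem stmt_0 (x : ℝ) (hx : 1 ≤ x) :
    Summable (fun n : ℕ =>
      x ^ (1 - 2 * ((n : ℤ) + 1)) / ((2 * ((n : ℝ) + 1)) * (2 * ((n : ℝ) + 1) - 1))) ∧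
    (1 < x →
      (∑' n : ℕ,
        x ^ (1 - 2 * ((n : ℤ) + 1)) / ((2 * ((n : ℝ) + 1)) * (2 * ((n : ℝ) + 1) - 1)))
      = (1 / 2) * (x * Real.log (1 - (x⁻¹) ^ 2)
          + Real.log ((1 + x⁻¹) / (1 - x⁻¹)))) := by
  have hx0 : (0 : ℝ) < x := lt_of_lt_of_le one_pos hx
  set y : ℝ := x⁻¹ with hy_def
  have hy0 : 0 < y := inv_pos.mpr hx0
  have hy1 : y ≤ 1 := by
    rw [hy_def]
    exact inv_le_one_of_one_le₀ hx
  have hterm : ∀ n : ℕ, x ^ (1 - 2 * ((n : ℤ) + 1)) = y ^ (2 * n + 1) := by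
    intro n
    have h1 : (1 - 2 * ((n : ℤ) + 1)) = -((2 * n + 1 : ℕ) : ℤ) := by push_cast; ring
    rw [h1, zpow_neg, zpow_natCast, ← inv_pow]
  constructor
  · have key : Summable (fun n : ℕ =>
        y ^ (2 * n + 1) / ((2 * ((n : ℝ) + 1)) * (2 * ((n : ℝ) + 1) - 1))) := by
      apply Summable.of_nonneg_of_le (f := fun n : ℕ => 1 / ((n : ℝ) + 1) ^ 2)
      · intro n
        have hn : (0 : ℝ) < 2 * ((n : ℝ) + 1) - 1 := by
          nlinarith [Nat.cast_nonneg (α := ℝ) n]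
        positivity
      · intro n
        have hnum : y ^ (2 * n + 1) ≤ 1 := pow_le_one₀ hy0.le hy1
        have hden : ((n : ℝ) + 1) ^ 2 ≤ (2 * ((n : ℝ) + 1)) * (2 * ((n : ℝ) + 1) - 1) := by
          nlinarith [Nat.cast_nonneg (α := ℝ) n]
        exact div_le_div₀ zero_le_one hnum (by positivity) hden
      · have h2 : Summable (fun n : ℕ => 1 / (n : ℝ) ^ 2) :=
          Real.summable_one_div_nat_pow.mpr one_lt_two
        have h3 := (summable_nat_add_iff 1).mpr h2
        refine h3.congr fun n => ?_
        push_cast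
        ring
    exact key.congr fun n => by rw [hterm n]
  · intro hx1
    have hy1' : y < 1 := by
      rw [hy_def]
      exact inv_lt_one_of_one_lt₀ hx1
    have hyabs : |y| < 1 := by rw [abs_of_pos hy0]; exact hy1'
    have hy2abs : |y ^ 2| < 1 := by
      rw [abs_pow]
      exact pow_lt_one₀ (abs_nonneg _) hyabs (by norm_num)
    have hA := (Real.hasSum_pow_div_log_of_abs_lt_one hy2abs).mul_left (x / 2)
    have hB := (Real.hasSum_log_sub_log_of_abs_lt_one hyabs).mul_left (1 / 2)
    have hxy : x * y = 1 := mul_inv_cancel₀ hx0.ne'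
    have hsum := hB.sub hA
    have hfun : (fun n : ℕ =>
        1 / 2 * ((2 : ℝ) * (1 / (2 * n + 1)) * y ^ (2 * n + 1))
          - x / 2 * ((y ^ 2) ^ (n + 1) / (n + 1)))
        = fun n : ℕ =>
          x ^ (1 - 2 * ((n : ℤ) + 1)) / ((2 * ((n : ℝ) + 1)) * (2 * ((n : ℝ) + 1) - 1)) := by
      funext n
      rw [hterm n]
      have h1 : (0 : ℝ) < 2 * (n : ℝ) + 1 := by positivity
      have h2 : (0 : ℝ) < (n : ℝ) + 1 := by positivity
      have h3 : (0 : ℝ) < 2 * ((n : ℝ) + 1) - 1 := by nlinarith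
      have hpow : (y ^ 2) ^ (n + 1) = y * y ^ (2 * n + 1) := by ring
      rw [hpow, div_mul_div_comm, show x * (y * y ^ (2 * n + 1)) = y ^ (2 * n + 1) from by
        rw [← mul_assoc, hxy, one_mul]]
      field_simp
      ring
    rw [hfun] at hsum
    rw [hsum.tsum_eq]
    have hlog : Real.log ((1 + y) / (1 - y)) = Real.log (1 + y) - Real.log (1 - y) :=
      Real.log_div (by positivity) (by nlinarith)
    rw [hlog]
    ring
end

section
/- For every real x > 1, the series f₂(x) := Σ_{r=2}^∞ x^{2-2r}/((2r-1)(2r-2)) converges and equals 1 - (1/2)[log(1 - x^{-2}) + x·log((1 + x^{-1})/(1 - x^{-1}))]. -/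
theorem stmt_1 (x : ℝ) (hx : 1 < x) :
    HasSum (fun n : ℕ =>
      x ^ (2 - 2 * ((n : ℤ) + 2)) / ((2 * ((n : ℝ) + 2) - 1) * (2 * ((n : ℝ) + 2) - 2)))
      (1 - (1 / 2) * (Real.log (1 - (x⁻¹) ^ 2)
        + x * Real.log ((1 + x⁻¹) / (1 - x⁻¹)))) := by
  set y := x⁻¹ with hy
  have hx0 : 0 < x := lt_trans one_pos hx
  have hy0 : 0 < y := inv_pos.mpr hx0
  have hy1 : y < 1 := inv_lt_one_of_one_lt₀ hx
  have hyabs : |y| < 1 := by rw [abs_of_pos hy0]; exact hy1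
  have hy2abs : |y ^ 2| < 1 := by
    rw [abs_of_nonneg (sq_nonneg y)]
    nlinarith
  -- even part: Σ y^(2n+2)/(2n+2)
  have hB := (Real.hasSum_pow_div_log_of_abs_lt_one hy2abs).mul_left (1 / 2)
  -- odd part: Σ 2/(2k+1) y^(2k+1) = log(1+y) - log(1-y)
  have hA := Real.hasSum_log_sub_log_of_abs_lt_one hyabs
  have hA' : HasSum (fun k : ℕ => (2 : ℝ) * (1 / (2 * (k + 1) + 1)) * y ^ (2 * (k + 1) + 1))
      ((Real.log (1 + y) - Real.log (1 - y)) -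
        ∑ i ∈ Finset.range 1, (2 : ℝ) * (1 / (2 * (i : ℕ) + 1)) * y ^ (2 * i + 1)) := by
    have := (hasSum_nat_add_iff' (f := fun k : ℕ =>
      (2 : ℝ) * (1 / (2 * (k : ℝ) + 1)) * y ^ (2 * k + 1)) 1).mpr hA
    convert this using 2 with k
    · rfl
    push_cast
    ring
  have hA'' := hA'.mul_left (1 / (2 * y))
  have hS := hB.sub hA''
  have hyne : y ≠ 0 := ne_of_gt hy0
  have hxy : x = y⁻¹ := by rw [hy, inv_inv]
  convert hS using 1
  · rfl
  · funext n
    have h1 : x ^ (2 - 2 * ((n : ℤ) + 2)) = y ^ (2 * n + 2) := by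
      have e : (2 : ℤ) - 2 * ((n : ℤ) + 2) = -((2 * n + 2 : ℕ) : ℤ) := by push_cast; ring
      rw [e, zpow_neg, zpow_natCast, hy, inv_pow]
    rw [h1]
    have h2 : (2 * ((n : ℝ) + 1) + 1) ≠ 0 := by positivity
    have h3 : ((n : ℝ) + 1) ≠ 0 := by positivity
    have h4 : (y ^ 2) ^ (n + 1) = y ^ (2 * n + 2) := by
      rw [← pow_mul]; ring_nf
    rw [h4]
    have h5 : y ^ (2 * (n + 1) + 1) = y ^ (2 * n + 2) * y := by
      rw [← pow_succ]; ring_nf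
    rw [h5]
    have h6 : (2 * ((n : ℝ) + 2) - 1) ≠ 0 := by nlinarith [Nat.cast_nonneg (α := ℝ) n]
    have h7 : (2 * ((n : ℝ) + 2) - 2) ≠ 0 := by nlinarith [Nat.cast_nonneg (α := ℝ) n]
    field_simp
    ring_nf
    have h3' : (1 + (n : ℝ)) ≠ 0 := by positivity
    field_simp
    ring
  · have hlog : Real.log ((1 + y) / (1 - y)) = Real.log (1 + y) - Real.log (1 - y) :=
      Real.log_div (by positivity) (by nlinarith)
    rw [hlog, hxy]
    simp only [Finset.range_one, Finset.sum_singleton]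
    field_simp
    ring
end

section
/- For every real x > 1, the series g₁(x) := Σ_{r=2}^∞ x^{2-2r}/(r(2r-1)(2r-2)) converges and equals 3/2 - (1/2)(x² + 1)·log(1 - x^{-2}) - x·log((1 + x^{-1})/(1 - x^{-1})). -/
theorem stmt_2 (x : ℝ) (hx : 1 < x) :
    HasSum (fun n : ℕ =>
      x ^ (2 - 2 * ((n : ℤ) + 2)) /
        (((n : ℝ) + 2) * (2 * ((n : ℝ) + 2) - 1) * (2 * ((n : ℝ) + 2) - 2)))
      (3 / 2 - (1 / 2) * (x ^ 2 + 1) * Real.log (1 - (x⁻¹) ^ 2)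
        - x * Real.log ((1 + x⁻¹) / (1 - x⁻¹))) := by
  set y : ℝ := x⁻¹ with hy_def
  have hx0 : (0 : ℝ) < x := lt_trans one_pos hx
  have hy0 : 0 < y := inv_pos.mpr hx0
  have hy1 : y < 1 := inv_lt_one_of_one_lt₀ hx
  have hyne : y ≠ 0 := ne_of_gt hy0
  have hxy : x = y⁻¹ := by rw [hy_def, inv_inv]
  have habs : |y| < 1 := by rw [abs_of_pos hy0]; exact hy1
  have habs2 : |y ^ 2| < 1 := by
    rw [abs_of_nonneg (sq_nonneg y)]
    nlinarith
  -- base log series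
  have h1 : HasSum (fun n : ℕ => (y ^ 2) ^ (n + 1) / (n + 1))
      (-Real.log (1 - y ^ 2)) := Real.hasSum_pow_div_log_of_abs_lt_one habs2
  -- shifted log series
  have h2 : HasSum (fun n : ℕ => (y ^ 2) ^ (n + 1 + 1) / (n + 1 + 1))
      (-Real.log (1 - y ^ 2) - y ^ 2) := by
    have := (hasSum_nat_add_iff' (f := fun n : ℕ => (y ^ 2) ^ (n + 1) / (n + 1)) 1).mpr h1
    simpa using this
  -- artanh-type series
  have h3 : HasSum (fun k : ℕ => (2 : ℝ) * (1 / (2 * k + 1)) * y ^ (2 * k + 1))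
      (Real.log (1 + y) - Real.log (1 - y)) :=
    Real.hasSum_log_sub_log_of_abs_lt_one habs
  have h4 : HasSum (fun k : ℕ => (2 : ℝ) * (1 / (2 * (k + 1) + 1)) * y ^ (2 * (k + 1) + 1))
      (Real.log (1 + y) - Real.log (1 - y) - 2 * y) := by
    have := (hasSum_nat_add_iff'
      (f := fun k : ℕ => (2 : ℝ) * (1 / (2 * k + 1)) * y ^ (2 * k + 1)) 1).mpr h3
    simpa using this
  have H := ((h2.mul_left (1 / (2 * y ^ 2))).sub (h4.mul_left (1 / y))).add
    (h1.mul_left (1 / 2))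
  have hy2ne : (y : ℝ) ^ 2 ≠ 0 := pow_ne_zero 2 hyne
  have hfun : (fun n : ℕ =>
      x ^ (2 - 2 * ((n : ℤ) + 2)) /
        (((n : ℝ) + 2) * (2 * ((n : ℝ) + 2) - 1) * (2 * ((n : ℝ) + 2) - 2)))
      = (fun n : ℕ =>
      1 / (2 * y ^ 2) * ((y ^ 2) ^ (n + 1 + 1) / ((n : ℝ) + 1 + 1)) -
          1 / y * (2 * (1 / (2 * ((n : ℝ) + 1) + 1)) * y ^ (2 * (n + 1) + 1)) +
        1 / 2 * ((y ^ 2) ^ (n + 1) / ((n : ℝ) + 1))) := by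
    funext n
    have hncast : (0 : ℝ) ≤ (n : ℝ) := n.cast_nonneg
    have hexp : (2 - 2 * ((n : ℤ) + 2)) = -((2 * n + 2 : ℕ) : ℤ) := by push_cast; ring
    rw [hexp, zpow_neg, zpow_natCast, ← inv_pow, ← hy_def]
    have hn1 : ((n : ℝ) + 1) ≠ 0 := by linarith
    have hn2 : ((n : ℝ) + 2) ≠ 0 := by linarith
    have hn3 : (2 * ((n : ℝ) + 1) + 1) ≠ 0 := by linarith
    have hd1 : (2 * ((n : ℝ) + 2) - 1) ≠ 0 := by
      intro h; nlinarith
    have hd2 : (2 * ((n : ℝ) + 2) - 2) ≠ 0 := by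
      intro h; nlinarith
    push_cast
    have hn1' : (1 + (n : ℝ)) ≠ 0 := by linarith
    field_simp
    ring_nf
    field_simp
    ring
  have hsum : (3 / 2 - (1 / 2) * (x ^ 2 + 1) * Real.log (1 - (x⁻¹) ^ 2)
        - x * Real.log ((1 + x⁻¹) / (1 - x⁻¹)))
      = (1 / (2 * y ^ 2) * (-Real.log (1 - y ^ 2) - y ^ 2)
          - 1 / y * (Real.log (1 + y) - Real.log (1 - y) - 2 * y)
          + 1 / 2 * -Real.log (1 - y ^ 2)) := by
    have hlog : Real.log ((1 + y) / (1 - y)) = Real.log (1 + y) - Real.log (1 - y) :=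
      Real.log_div (by nlinarith) (by nlinarith)
    rw [← hy_def, hlog, hxy]
    have hx2 : (y⁻¹ : ℝ) ^ 2 = (y ^ 2)⁻¹ := by rw [inv_pow]
    rw [hx2]
    field_simp
    ring
  rw [hfun, hsum]
  exact H
end

section
/- For every real x > 1, the series g₂(x) := Σ_{r=1}^∞ x^{1-2r}/((2r+1)·r·(2r-1)) converges and equals -x + x·log(1 - x^{-2}) + (1/2)(x² + 1)·log((1 + x^{-1})/(1 - x^{-1})). -/
theorem stmt_3 (x : ℝ) (hx : 1 < x) :
    HasSum (fun n : ℕ =>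
      x ^ (1 - 2 * ((n : ℤ) + 1)) /
        ((2 * ((n : ℝ) + 1) + 1) * ((n : ℝ) + 1) * (2 * ((n : ℝ) + 1) - 1)))
      (-x + x * Real.log (1 - (x⁻¹) ^ 2)
        + (1 / 2) * (x ^ 2 + 1) * Real.log ((1 + x⁻¹) / (1 - x⁻¹))) := by
  set y := x⁻¹ with hy
  have hx0 : (0:ℝ) < x := lt_trans one_pos hx
  have hxne : x ≠ 0 := ne_of_gt hx0
  have hy0 : 0 < y := inv_pos.mpr hx0
  have hy1 : y < 1 := inv_lt_one_of_one_lt₀ hx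
  have hyabs : |y| < 1 := abs_lt.mpr ⟨lt_trans (by norm_num) hy0, hy1⟩
  have hxy : x * y = 1 := mul_inv_cancel₀ hxne
  have hxinv : x = y⁻¹ := by rw [hy, inv_inv]
  set A := (Real.log (1 + y) - Real.log (1 - y)) / 2 with hA
  -- artanh series
  have h1 : HasSum (fun k : ℕ => y ^ (2 * k + 1) / (2 * (k:ℝ) + 1)) A := by
    have h := (Real.hasSum_log_sub_log_of_abs_lt_one hyabs).mul_left (1/2)
    have heq : (fun k : ℕ => 1/2 * ((2:ℝ) * (1 / (2 * k + 1)) * y ^ (2 * k + 1)))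
        = fun k : ℕ => y ^ (2 * k + 1) / (2 * (k:ℝ) + 1) := by
      funext k
      have : (2 * (k:ℝ) + 1) ≠ 0 := by positivity
      field_simp
    rw [heq] at h
    have hA' : A = 1/2 * (Real.log (1 + y) - Real.log (1 - y)) := by rw [hA]; ring
    rw [hA']; exact h
  -- shifted artanh series
  have h3 : HasSum (fun k : ℕ => y ^ (2 * (k+1) + 1) / (2 * ((k:ℝ)+1) + 1)) (A - y) := by
    have h := (hasSum_nat_add_iff'
      (f := fun k : ℕ => y ^ (2 * k + 1) / (2 * (k:ℝ) + 1)) 1).mpr h1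
    simp only [Finset.range_one, Finset.sum_singleton] at h
    norm_num at h
    push_cast at h
    exact h
  -- log series
  have h2 : HasSum (fun n : ℕ => (y^2) ^ (n + 1) / ((n:ℝ) + 1))
      (-Real.log (1 - y^2)) := by
    have habs2 : |y^2| < 1 := by
      rw [abs_of_nonneg (sq_nonneg y)]
      nlinarith
    simpa using Real.hasSum_pow_div_log_of_abs_lt_one habs2
  have H := (h1.sub (h2.mul_left x)).add (h3.mul_left (x^2))
  have hsum_eq : A - x * -Real.log (1 - y ^ 2) + x ^ 2 * (A - y)
      = -x + x * Real.log (1 - y ^ 2)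
        + (1 / 2) * (x ^ 2 + 1) * Real.log ((1 + y) / (1 - y)) := by
    rw [Real.log_div (by nlinarith) (by nlinarith), hA]
    have hx2y : x ^ 2 * y = x := by
      rw [sq, mul_assoc, hxy, mul_one]
    linarith [hx2y]
  rw [hsum_eq] at H
  refine H.congr_fun fun n => ?_
  have hpow : x ^ (1 - 2 * ((n : ℤ) + 1)) = y ^ (2 * n + 1) := by
    have h1 : (1 - 2 * ((n : ℤ) + 1)) = -(2 * n + 1 : ℕ) := by push_cast; ring
    rw [h1, zpow_neg, zpow_natCast, ← inv_pow]
  rw [hpow, hxinv]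
  have hn1 : ((n:ℝ) + 1) ≠ 0 := by positivity
  have hn2 : (2 * (n:ℝ) + 1) ≠ 0 := by positivity
  have hn3 : (2 * ((n:ℝ) + 1) + 1) ≠ 0 := by positivity
  have hn4 : (2 * ((n:ℝ) + 1) - 1) ≠ 0 := by
    have : (0:ℝ) ≤ (n:ℝ) := Nat.cast_nonneg n
    intro h; nlinarith
  field_simp
  ring
end

section
/- For every real x ≥ 3, the function f₂(x) := Σ_{r=2}^∞ x^{2-2r}/((2r-1)(2r-2)) satisfies 0 < f₂(x) ≤ 0.2/x². -/
theorem stmt_5 (x : ℝ) (hx : 3 ≤ x) :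
    0 < (∑' n : ℕ,
        x ^ (2 - 2 * ((n : ℤ) + 2)) / ((2 * ((n : ℝ) + 2) - 1) * (2 * ((n : ℝ) + 2) - 2))) ∧
    (∑' n : ℕ,
        x ^ (2 - 2 * ((n : ℤ) + 2)) / ((2 * ((n : ℝ) + 2) - 1) * (2 * ((n : ℝ) + 2) - 2)))
      ≤ 0.2 / x ^ 2 := by
  have hx0 : (0:ℝ) < x := by linarith
  set y : ℝ := (x ^ 2)⁻¹ with hy_def
  have hy0 : 0 < y := by positivity
  have hy9 : y ≤ 1/9 := by
    rw [hy_def, inv_le_comm₀ (by positivity) (by norm_num)]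
    nlinarith
  have hy1 : y < 1 := by linarith
  set f : ℕ → ℝ := fun n =>
      x ^ (2 - 2 * ((n : ℤ) + 2)) / ((2 * ((n : ℝ) + 2) - 1) * (2 * ((n : ℝ) + 2) - 2)) with hf
  have hfeq : ∀ n, f n = y ^ (n + 1) / ((2 * (n : ℝ) + 3) * (2 * (n : ℝ) + 2)) := by
    intro n
    have h1 : (2 - 2 * ((n : ℤ) + 2)) = -((2 * (n + 1) : ℕ) : ℤ) := by push_cast; ring
    have h2 : x ^ (2 - 2 * ((n : ℤ) + 2)) = y ^ (n + 1) := by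
      rw [h1, zpow_neg, zpow_natCast, pow_mul, hy_def, inv_pow]
    rw [hf]
    simp only [h2]
    congr 1
    ring
  have hdenpos : ∀ n : ℕ, (0:ℝ) < (2 * (n : ℝ) + 3) * (2 * (n : ℝ) + 2) := by
    intro n
    have : (0:ℝ) ≤ (n : ℝ) := Nat.cast_nonneg n
    nlinarith
  have hfpos : ∀ n, 0 < f n := by
    intro n
    rw [hfeq n]
    exact div_pos (pow_pos hy0 _) (hdenpos n)
  set g : ℕ → ℝ := fun n => y ^ n * (y / 6) with hg
  have hsumg : Summable g := (summable_geometric_of_lt_one hy0.le hy1).mul_right _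
  have hle : ∀ n, f n ≤ g n := by
    intro n
    rw [hfeq n, hg]
    have hden6 : (6:ℝ) ≤ (2 * (n : ℝ) + 3) * (2 * (n : ℝ) + 2) := by
      have : (0:ℝ) ≤ (n : ℝ) := Nat.cast_nonneg n
      nlinarith
    have h1 : y ^ (n + 1) / ((2 * (n : ℝ) + 3) * (2 * (n : ℝ) + 2)) ≤ y ^ (n + 1) / 6 :=
      div_le_div_of_nonneg_left (pow_pos hy0 _).le (by norm_num) hden6
    calc y ^ (n + 1) / ((2 * (n : ℝ) + 3) * (2 * (n : ℝ) + 2)) ≤ y ^ (n + 1) / 6 := h1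
      _ = y ^ n * (y / 6) := by rw [pow_succ]; ring
  have hsumf : Summable f :=
    Summable.of_nonneg_of_le (fun n => (hfpos n).le) hle hsumg
  constructor
  · exact Summable.tsum_pos hsumf (fun n => (hfpos n).le) 0 (hfpos 0)
  · have h1 : (∑' n, f n) ≤ ∑' n, g n := Summable.tsum_le_tsum hle hsumf hsumg
    have h2 : (∑' n, g n) = (1 - y)⁻¹ * (y / 6) := by
      rw [hg, tsum_mul_right, tsum_geometric_of_lt_one hy0.le hy1]
    have h3 : (1 - y)⁻¹ * (y / 6) ≤ 0.2 / x ^ 2 := by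
      have hxy : 0.2 / x ^ 2 = 0.2 * y := by rw [hy_def]; ring
      rw [hxy]
      have h1y : (0:ℝ) < 1 - y := by linarith
      rw [inv_mul_le_iff₀ h1y]
      nlinarith
    calc (∑' n, f n) ≤ ∑' n, g n := h1
      _ = (1 - y)⁻¹ * (y / 6) := h2
      _ ≤ 0.2 / x ^ 2 := h3
end

section
/- For every real x ≥ 3, the function g₁(x) := Σ_{r=2}^∞ x^{2-2r}/(r(2r-1)(2r-2)) satisfies 0 < g₁(x) ≤ 0.1/x². -/
theorem stmt_6 (x : ℝ) (hx : 3 ≤ x) :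
    0 < (∑' n : ℕ,
        x ^ (2 - 2 * ((n : ℤ) + 2)) /
          (((n : ℝ) + 2) * (2 * ((n : ℝ) + 2) - 1) * (2 * ((n : ℝ) + 2) - 2))) ∧
    (∑' n : ℕ,
        x ^ (2 - 2 * ((n : ℤ) + 2)) /
          (((n : ℝ) + 2) * (2 * ((n : ℝ) + 2) - 1) * (2 * ((n : ℝ) + 2) - 2)))
      ≤ 0.1 / x ^ 2 := by
  have hx0 : (0:ℝ) < x := by linarith
  set r : ℝ := (x ^ 2)⁻¹ with hr
  have hr0 : 0 < r := by positivity
  have hr1 : r < 1 := by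
    rw [hr]
    rw [inv_lt_one_iff₀]
    right; nlinarith
  have hpow : ∀ n : ℕ, x ^ (2 - 2 * ((n : ℤ) + 2)) = r ^ (n + 1) := by
    intro n
    have h1 : (2 - 2 * ((n : ℤ) + 2)) = -((2 * (n + 1) : ℕ) : ℤ) := by push_cast; ring
    rw [h1, zpow_neg, zpow_natCast, pow_mul, hr, ← inv_pow]
  have hd : ∀ n : ℕ, (12:ℝ) ≤ ((n : ℝ) + 2) * (2 * ((n : ℝ) + 2) - 1) * (2 * ((n : ℝ) + 2) - 2) := by
    intro n
    have : (0:ℝ) ≤ (n:ℝ) := Nat.cast_nonneg n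
    nlinarith [this, sq_nonneg (n:ℝ), mul_nonneg (mul_nonneg this this) this]
  have hd0 : ∀ n : ℕ, (0:ℝ) < ((n : ℝ) + 2) * (2 * ((n : ℝ) + 2) - 1) * (2 * ((n : ℝ) + 2) - 2) := by
    intro n; linarith [hd n]
  have hfnn : ∀ n : ℕ, 0 ≤ x ^ (2 - 2 * ((n : ℤ) + 2)) /
      (((n : ℝ) + 2) * (2 * ((n : ℝ) + 2) - 1) * (2 * ((n : ℝ) + 2) - 2)) := by
    intro n
    apply div_nonneg
    · rw [hpow]; positivity
    · exact (hd0 n).le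
  have hfle : ∀ n : ℕ, x ^ (2 - 2 * ((n : ℤ) + 2)) /
      (((n : ℝ) + 2) * (2 * ((n : ℝ) + 2) - 1) * (2 * ((n : ℝ) + 2) - 2)) ≤ (r / 12) * r ^ n := by
    intro n
    rw [hpow]
    have : (r / 12) * r ^ n = r ^ (n + 1) / 12 := by ring
    rw [this]
    exact div_le_div_of_nonneg_left (by positivity) (by norm_num) (hd n)
  have hgsum : Summable (fun n : ℕ => (r / 12) * r ^ n) :=
    (summable_geometric_of_lt_one hr0.le hr1).mul_left _
  have hfsum : Summable (fun n : ℕ => x ^ (2 - 2 * ((n : ℤ) + 2)) /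
      (((n : ℝ) + 2) * (2 * ((n : ℝ) + 2) - 1) * (2 * ((n : ℝ) + 2) - 2))) :=
    Summable.of_nonneg_of_le hfnn hfle hgsum
  constructor
  · apply Summable.tsum_pos hfsum hfnn 0
    apply div_pos
    · rw [hpow]; positivity
    · exact hd0 0
  · have h1 : (∑' n : ℕ, x ^ (2 - 2 * ((n : ℤ) + 2)) /
        (((n : ℝ) + 2) * (2 * ((n : ℝ) + 2) - 1) * (2 * ((n : ℝ) + 2) - 2)))
        ≤ ∑' n : ℕ, (r / 12) * r ^ n := Summable.tsum_le_tsum hfle hfsum hgsum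
    have h2 : (∑' n : ℕ, (r / 12) * r ^ n) = (r / 12) * (1 - r)⁻¹ := by
      rw [tsum_mul_left, tsum_geometric_of_lt_one hr0.le hr1]
    have h3 : (r / 12) * (1 - r)⁻¹ ≤ 0.1 / x ^ 2 := by
      have hx2 : (0:ℝ) < x ^ 2 := by positivity
      have h1r : (0:ℝ) < 1 - r := by linarith
      have hx9 : (9:ℝ) ≤ x ^ 2 := by nlinarith
      rw [hr] at h1r ⊢
      have hne : x ^ 2 - 1 ≠ 0 := by nlinarith
      have key : (x ^ 2)⁻¹ / 12 * (1 - (x ^ 2)⁻¹)⁻¹ = 1 / (12 * (x ^ 2 - 1)) := by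
        field_simp
      rw [key, div_le_div_iff₀ (by nlinarith) hx2]
      nlinarith
    linarith [h1, h2.le, h2.ge]
end

section
/- For every real x ≥ 3, the function g₂(x) := Σ_{r=1}^∞ x^{1-2r}/((2r+1)·r·(2r-1)) satisfies 0 < g₂(x) ≤ 0.4/x. -/
theorem stmt_7 (x : ℝ) (hx : 3 ≤ x) :
    0 < (∑' n : ℕ,
        x ^ (1 - 2 * ((n : ℤ) + 1)) /
          ((2 * ((n : ℝ) + 1) + 1) * ((n : ℝ) + 1) * (2 * ((n : ℝ) + 1) - 1))) ∧
    (∑' n : ℕ,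
        x ^ (1 - 2 * ((n : ℤ) + 1)) /
          ((2 * ((n : ℝ) + 1) + 1) * ((n : ℝ) + 1) * (2 * ((n : ℝ) + 1) - 1)))
      ≤ 0.4 / x := by
  have hx0 : (0:ℝ) < x := by linarith
  have hxne : x ≠ 0 := ne_of_gt hx0
  set r : ℝ := x⁻¹ * x⁻¹ with hr
  have hr0 : 0 ≤ r := by positivity
  have hrle : r ≤ 1/9 := by
    have h1 : x⁻¹ ≤ 1/3 := by
      rw [inv_le_comm₀ ‹(0:ℝ) < x› (by norm_num)]; linarith
    have h2 : 0 ≤ x⁻¹ := by positivity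
    calc r = x⁻¹ * x⁻¹ := rfl
      _ ≤ (1/3) * (1/3) := by nlinarith
      _ = 1/9 := by norm_num
  have hr1 : r < 1 := lt_of_le_of_lt hrle (by norm_num)
  have hxpow : ∀ n : ℕ, x ^ ((1:ℤ) - 2 * ((n:ℤ)+1)) = x⁻¹ * r^n := by
    intro n
    have h1 : (1:ℤ) - 2*((n:ℤ)+1) = -(((1+2*n : ℕ) : ℤ)) := by push_cast; ring
    rw [h1, zpow_neg, zpow_natCast, pow_add, pow_mul, pow_one, mul_inv, hr, ← inv_pow, sq, mul_inv]
  have hc : ∀ n : ℕ, (3:ℝ) ≤ (2 * ((n : ℝ) + 1) + 1) * ((n : ℝ) + 1) * (2 * ((n : ℝ) + 1) - 1) := by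
    intro n
    have hn : (0:ℝ) ≤ n := Nat.cast_nonneg n
    nlinarith [sq_nonneg ((n:ℝ)), hn]
  have hpos : ∀ n : ℕ, 0 < x ^ ((1:ℤ) - 2 * ((n:ℤ)+1)) /
      ((2 * ((n : ℝ) + 1) + 1) * ((n : ℝ) + 1) * (2 * ((n : ℝ) + 1) - 1)) := by
    intro n
    apply div_pos (zpow_pos hx0 _) (lt_of_lt_of_le (by norm_num) (hc n))
  have hbound : ∀ n : ℕ, x ^ ((1:ℤ) - 2 * ((n:ℤ)+1)) /
      ((2 * ((n : ℝ) + 1) + 1) * ((n : ℝ) + 1) * (2 * ((n : ℝ) + 1) - 1))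
      ≤ x⁻¹ * r^n / 3 := by
    intro n
    rw [hxpow n]
    exact div_le_div_of_nonneg_left (by positivity) (by norm_num) (hc n)
  have hgsum : Summable (fun n : ℕ => x⁻¹ * r^n / 3) := by
    apply Summable.div_const
    exact (summable_geometric_of_lt_one hr0 hr1).mul_left _
  have hsum : Summable (fun n : ℕ => x ^ ((1:ℤ) - 2 * ((n:ℤ)+1)) /
      ((2 * ((n : ℝ) + 1) + 1) * ((n : ℝ) + 1) * (2 * ((n : ℝ) + 1) - 1))) := by
    apply Summable.of_nonneg_of_le (fun n => (hpos n).le) hbound hgsum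
  constructor
  · exact Summable.tsum_pos hsum (fun n => (hpos n).le) 0 (hpos 0)
  · have h1 : (∑' n : ℕ, x ^ ((1:ℤ) - 2 * ((n:ℤ)+1)) /
        ((2 * ((n : ℝ) + 1) + 1) * ((n : ℝ) + 1) * (2 * ((n : ℝ) + 1) - 1)))
        ≤ ∑' n : ℕ, x⁻¹ * r^n / 3 :=
      Summable.tsum_le_tsum hbound hsum hgsum
    have h2 : (∑' n : ℕ, x⁻¹ * r^n / 3) = x⁻¹ / 3 * (1 - r)⁻¹ := by
      rw [tsum_div_const, tsum_mul_left, tsum_geometric_of_lt_one hr0 hr1]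
      ring
    have h3 : x⁻¹ / 3 * (1 - r)⁻¹ ≤ 0.4 / x := by
      have hinv : (1 - r)⁻¹ ≤ (8/9 : ℝ)⁻¹ := by
        apply inv_anti₀ (by norm_num)
        linarith
      have hxi : 0 ≤ x⁻¹ := by positivity
      calc x⁻¹ / 3 * (1 - r)⁻¹ ≤ x⁻¹ / 3 * (8/9:ℝ)⁻¹ := by
            apply mul_le_mul_of_nonneg_left hinv (by positivity)
        _ = (3/8) * x⁻¹ := by ring
        _ ≤ 0.4 * x⁻¹ := by nlinarith
        _ = 0.4 / x := by rw [div_eq_mul_inv]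
    linarith
end

section
/- Let f(x) := 1/(x·log x) and let E₁(u) := ∫_1^∞ e^{-ut}/t dt be the exponential integral. For every real N ≥ 3, with y := 1/log N, one has ∫_N^∞ x^{3/2}·f''(x) dx = ((5/2)y + y²)/√N + (3/4)·E₁((1/2)·log N). -/
open Real Set MeasureTheory Filter Topology

noncomputable def Gf (x : ℝ) : ℝ :=
  -(5/2 / Real.log x + 1 / (Real.log x) ^ 2) * x ^ (-(1/2) : ℝ)

noncomputable def Gp (x : ℝ) : ℝ :=
  (5/4 / Real.log x + 3 / (Real.log x) ^ 2 + 2 / (Real.log x) ^ 3) * x ^ (-(3:ℝ)/2)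

noncomputable def Qf (x : ℝ) : ℝ := 3/4 * x ^ (-(3:ℝ)/2) / Real.log x

lemma aux_d1 {x : ℝ} (hx : 1 < x) :
    HasDerivAt (fun y => 1 / (y * Real.log y)) (-(Real.log x + 1) / (x * Real.log x) ^ 2) x := by
  have hx0 : (0:ℝ) < x := by linarith
  have hL : 0 < Real.log x := Real.log_pos hx
  have h1 : HasDerivAt (fun y => y * Real.log y) (Real.log x + 1) x := by
    have := (hasDerivAt_id x).mul (Real.hasDerivAt_log hx0.ne')
    exact this.congr_deriv (by simp only [id_eq, one_mul, mul_inv_cancel₀ hx0.ne', add_comm])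
  have h2 := h1.inv (by positivity : x * Real.log x ≠ 0)
  exact h2.congr_of_eventuallyEq (Filter.Eventually.of_forall fun y => by simp)

lemma aux_d2 {x : ℝ} (hx : 1 < x) :
    HasDerivAt (fun y => -(Real.log y + 1) / (y * Real.log y) ^ 2)
      ((2 * (Real.log x) ^ 2 + 3 * Real.log x + 2) / (x ^ 3 * (Real.log x) ^ 3)) x := by
  have hx0 : (0:ℝ) < x := by linarith
  have hL : 0 < Real.log x := Real.log_pos hx
  have h1 : HasDerivAt (fun y => y * Real.log y) (Real.log x + 1) x := by
    have := (hasDerivAt_id x).mul (Real.hasDerivAt_log hx0.ne')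
    exact this.congr_deriv (by simp only [id_eq, one_mul, mul_inv_cancel₀ hx0.ne', add_comm])
  have hnum : HasDerivAt (fun y => -(Real.log y + 1)) (-(x⁻¹)) x :=
    ((Real.hasDerivAt_log hx0.ne').add_const 1).neg
  have hden : HasDerivAt (fun y => (y * Real.log y) ^ 2)
      (2 * (x * Real.log x) ^ 1 * (Real.log x + 1)) x := h1.pow 2
  have h := hnum.div hden (by positivity)
  refine h.congr_deriv ?_
  field_simp
  ring

lemma aux_G {x : ℝ} (hx : 1 < x) : HasDerivAt Gf (Gp x) x := by
  have hx0 : (0:ℝ) < x := by linarith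
  have hL : 0 < Real.log x := Real.log_pos hx
  have hinv : HasDerivAt (fun y => (Real.log y)⁻¹) (-(x⁻¹) / (Real.log x) ^ 2) x := by
    exact (Real.hasDerivAt_log hx0.ne').inv hL.ne'
  have hinv2 : HasDerivAt (fun y => ((Real.log y) ^ 2)⁻¹)
      (-(2 * Real.log x ^ 1 * x⁻¹) / ((Real.log x) ^ 2) ^ 2) x :=
    ((Real.hasDerivAt_log hx0.ne').pow 2).inv (pow_ne_zero 2 hL.ne')
  have hcoef : HasDerivAt (fun y => -(5/2 / Real.log y + 1 / (Real.log y) ^ 2))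
      (-(5/2 * (-(x⁻¹) / (Real.log x) ^ 2) + (-(2 * Real.log x ^ 1 * x⁻¹) / ((Real.log x) ^ 2) ^ 2))) x := by
    have h1 := (hinv.const_mul (5/2 : ℝ)).add hinv2
    have := h1.neg
    simp only [one_div] at *
    exact this.congr_of_eventuallyEq (Filter.Eventually.of_forall fun y => by simp [div_eq_mul_inv])
  have hpow : HasDerivAt (fun y : ℝ => y ^ (-(1/2) : ℝ))
      ((-(1/2) : ℝ) * x ^ ((-(1/2) : ℝ) - 1)) x :=
    Real.hasDerivAt_rpow_const (Or.inl hx0.ne')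
  have h := hcoef.mul hpow
  rw [show Gf = fun y => -(5/2 / Real.log y + 1 / (Real.log y) ^ 2) * y ^ (-(1/2) : ℝ) from rfl]
  refine h.congr_deriv ?_
  have e1 : x ^ ((-(1/2) : ℝ) - 1) = x ^ (-(3:ℝ)/2) := by norm_num
  have e2 : x ^ (-(3:ℝ)/2) = x ^ (-(1/2) : ℝ) * x⁻¹ := by
    rw [← Real.rpow_neg_one x, ← Real.rpow_add hx0]; norm_num
  rw [Gp, e1, e2]
  field_simp
  ring

lemma aux_Glim : Tendsto Gf atTop (𝓝 0) := by
  have h1 : Tendsto (fun x : ℝ => 5/2 / Real.log x) atTop (𝓝 0) :=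
    tendsto_const_nhds.div_atTop Real.tendsto_log_atTop
  have h2 : Tendsto (fun x : ℝ => 1 / (Real.log x) ^ 2) atTop (𝓝 0) :=
    tendsto_const_nhds.div_atTop ((tendsto_pow_atTop (two_ne_zero)).comp Real.tendsto_log_atTop)
  have h3 : Tendsto (fun x : ℝ => x ^ (-(1/2) : ℝ)) atTop (𝓝 0) := by
    simpa using tendsto_rpow_neg_atTop (by norm_num : (0:ℝ) < 1/2)
  have := (((h1.add h2).neg).mul h3)
  have h0 : -((0:ℝ) + 0) * 0 = 0 := by ring
  rw [← h0]
  exact this.congr (fun x => by rw [Gf])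

lemma aux_cont {N : ℝ} (hN : 3 ≤ N) : ContinuousOn Gp (Ioi N) ∧ ContinuousOn Qf (Ioi N) := by
  have hlog : ContinuousOn Real.log (Ioi N) :=
    Real.continuousOn_log.mono (fun x hx => by
      simp only [mem_compl_iff, mem_singleton_iff] at *
      intro h; rw [mem_Ioi] at hx; nlinarith [hx])
  have hLne : ∀ x ∈ Ioi N, Real.log x ≠ 0 := by
    intro x hx
    have : (1:ℝ) < x := by rw [mem_Ioi] at hx; linarith
    exact (Real.log_pos this).ne'
  have hrpow : ContinuousOn (fun x : ℝ => x ^ (-(3:ℝ)/2)) (Ioi N) := fun x hx =>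
    (Real.continuousAt_rpow_const x _ (Or.inl (ne_of_gt (by rw [mem_Ioi] at hx; nlinarith)))).continuousWithinAt
  constructor
  · exact (((continuousOn_const.div hlog hLne).add
      (continuousOn_const.div (hlog.pow 2) (fun x hx => pow_ne_zero 2 (hLne x hx)))).add
      (continuousOn_const.div (hlog.pow 3) (fun x hx => pow_ne_zero 3 (hLne x hx)))).mul hrpow
  · exact (continuousOn_const.mul hrpow).div hlog hLne

lemma aux_int {N : ℝ} (hN : 3 ≤ N) : IntegrableOn Gp (Ioi N) ∧ IntegrableOn Qf (Ioi N) := by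
  have hN0 : (0:ℝ) < N := by linarith
  have hbig : IntegrableOn (fun x : ℝ => 7 * x ^ (-(3:ℝ)/2)) (Ioi N) :=
    (integrableOn_Ioi_rpow_of_lt (by norm_num) hN0).const_mul 7
  have hL1 : ∀ x ∈ Ioi N, 1 < Real.log x := by
    intro x hx; rw [mem_Ioi] at hx
    rw [show (1:ℝ) = Real.log (Real.exp 1) by simp]
    exact Real.log_lt_log (Real.exp_pos 1) (by nlinarith [Real.exp_one_lt_d9])
  obtain ⟨hc1, hc2⟩ := aux_cont hN
  constructor
  · refine hbig.mono' (hc1.aestronglyMeasurable measurableSet_Ioi) ?_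
    filter_upwards [ae_restrict_mem measurableSet_Ioi] with x hx
    have hL := hL1 x hx
    have hx0 : (0:ℝ) < x := by rw [mem_Ioi] at hx; linarith
    have hB : (0:ℝ) < x ^ (-(3:ℝ)/2) := Real.rpow_pos_of_pos hx0 _
    have h1 : 5/4 / Real.log x ≤ 5/4 := div_le_self (by norm_num) hL.le
    have h2 : 3 / (Real.log x) ^ 2 ≤ 3 := div_le_self (by norm_num) (one_le_pow₀ hL.le)
    have h3 : 2 / (Real.log x) ^ 3 ≤ 2 := div_le_self (by norm_num) (one_le_pow₀ hL.le)
    have hp1 : 0 < 5/4 / Real.log x := by positivity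
    have hp2 : 0 < 3 / (Real.log x) ^ 2 := by positivity
    have hp3 : 0 < 2 / (Real.log x) ^ 3 := by positivity
    rw [Gp, Real.norm_eq_abs, abs_of_pos (by positivity)]
    nlinarith
  · refine hbig.mono' (hc2.aestronglyMeasurable measurableSet_Ioi) ?_
    filter_upwards [ae_restrict_mem measurableSet_Ioi] with x hx
    have hL := hL1 x hx
    have hx0 : (0:ℝ) < x := by rw [mem_Ioi] at hx; linarith
    have hB : (0:ℝ) < x ^ (-(3:ℝ)/2) := Real.rpow_pos_of_pos hx0 _
    rw [Qf, Real.norm_eq_abs, abs_of_pos (by positivity), div_le_iff₀ (by linarith)]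
    nlinarith

lemma aux_subst {N : ℝ} (hN : 3 ≤ N) :
    ∫ x in Ioi N, Qf x = 3/4 * ∫ t in Ioi (1:ℝ), Real.exp (-((1/2) * Real.log N) * t) / t := by
  have hN0 : (0:ℝ) < N := by linarith
  set a := Real.log N with ha_def
  have ha0 : 0 < a := Real.log_pos (by linarith)
  have himg : Ioi N = (fun t => Real.exp (a * t)) '' Ioi 1 := by
    ext x; simp only [mem_image, mem_Ioi]
    constructor
    · intro hx
      have hx0 : (0:ℝ) < x := by linarith
      refine ⟨Real.log x / a, ?_, ?_⟩
      · rw [lt_div_iff₀ ha0, one_mul]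
        exact Real.log_lt_log hN0 hx
      · rw [mul_div_cancel₀ _ ha0.ne', Real.exp_log hx0]
    · rintro ⟨t, ht, rfl⟩
      calc N = Real.exp a := (Real.exp_log hN0).symm
        _ < Real.exp (a * t) := by
            apply Real.exp_lt_exp.mpr; nlinarith
  have hder : ∀ t ∈ Ioi (1:ℝ), HasDerivWithinAt (fun t => Real.exp (a * t))
      (Real.exp (a * t) * a) (Ioi 1) t := by
    intro t ht
    have h := ((Real.hasDerivAt_exp (a * t)).comp t ((hasDerivAt_id t).const_mul a)).hasDerivWithinAt (s := Ioi 1)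
    exact h.congr_deriv (by ring)
  have hinj : InjOn (fun t => Real.exp (a * t)) (Ioi 1) :=
    (Real.exp_injective.comp (mul_right_injective₀ ha0.ne')).injOn
  rw [himg, integral_image_eq_integral_abs_deriv_smul measurableSet_Ioi hder hinj Qf]
  rw [← integral_const_mul]
  apply setIntegral_congr_fun measurableSet_Ioi
  intro t ht
  rw [mem_Ioi] at ht
  have ht0 : (0:ℝ) < t := by linarith
  have hexp : (0:ℝ) < Real.exp (a * t) := Real.exp_pos _
  simp only [smul_eq_mul]
  rw [abs_of_pos (by positivity), Qf]
  rw [← Real.exp_mul, Real.log_exp]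
  rw [show -((1/2) * a) * t = a * t + a * t * (-(3:ℝ)/2) by ring, Real.exp_add]
  field_simp

theorem stmt_15 (N : ℝ) (hN : 3 ≤ N) :
    let f : ℝ → ℝ := fun x => 1 / (x * Real.log x)
    let E₁ : ℝ → ℝ := fun u => ∫ t in Set.Ioi (1 : ℝ), Real.exp (-u * t) / t
    let y : ℝ := 1 / Real.log N
    (∫ x in Set.Ioi N, x ^ ((3 : ℝ) / 2) * deriv (deriv f) x)
      = ((5 / 2) * y + y ^ 2) / Real.sqrt N + (3 / 4) * E₁ ((1 / 2) * Real.log N) := by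
  intro f E₁ y
  have hN0 : (0:ℝ) < N := by linarith
  have hN1 : (1:ℝ) < N := by linarith
  have ha0 : 0 < Real.log N := Real.log_pos hN1
  -- Step 1: rewrite the integrand
  have step1 : (∫ x in Set.Ioi N, x ^ ((3 : ℝ) / 2) * deriv (deriv f) x)
      = ∫ x in Set.Ioi N, (Gp x + Qf x) := by
    apply setIntegral_congr_fun measurableSet_Ioi
    intro x hx
    rw [mem_Ioi] at hx
    have hx1 : (1:ℝ) < x := by linarith
    have hx0 : (0:ℝ) < x := by linarith
    have hL : 1 < Real.log x := by
      rw [show (1:ℝ) = Real.log (Real.exp 1) by simp]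
      exact Real.log_lt_log (Real.exp_pos 1) (by nlinarith [Real.exp_one_lt_d9])
    have hL0 : 0 < Real.log x := by linarith
    have hd : deriv (deriv f) x
        = (2 * (Real.log x) ^ 2 + 3 * Real.log x + 2) / (x ^ 3 * (Real.log x) ^ 3) := by
      have hev : deriv f =ᶠ[𝓝 x] (fun y => -(Real.log y + 1) / (y * Real.log y) ^ 2) := by
        filter_upwards [eventually_gt_nhds hx1] with z hz
        exact (aux_d1 hz).deriv
      rw [hev.deriv_eq]
      exact (aux_d2 hx1).deriv
    have e3 : x ^ ((3:ℝ)/2) = x ^ (-(3:ℝ)/2) * x ^ (3:ℕ) := by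
      rw [← Real.rpow_natCast x 3, ← Real.rpow_add hx0]; norm_num
    have hB : (0:ℝ) < x ^ (-(3:ℝ)/2) := Real.rpow_pos_of_pos hx0 _
    show x ^ ((3:ℝ)/2) * deriv (deriv f) x = Gp x + Qf x
    rw [hd, Gp, Qf, e3]
    field_simp
    ring
  have hInt := aux_int hN
  have step2 : (∫ x in Set.Ioi N, (Gp x + Qf x))
      = (∫ x in Set.Ioi N, Gp x) + ∫ x in Set.Ioi N, Qf x :=
    integral_add hInt.1 hInt.2
  have step3 : (∫ x in Set.Ioi N, Gp x) = 0 - Gf N :=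
    integral_Ioi_of_hasDerivAt_of_tendsto (aux_G hN1).continuousAt.continuousWithinAt
      (fun x hx => aux_G (by rw [mem_Ioi] at hx; linarith)) hInt.1 aux_Glim
  have step4 := aux_subst hN
  rw [step1, step2, step3, step4]
  have hE : E₁ ((1/2) * Real.log N) = ∫ t in Set.Ioi (1:ℝ), Real.exp (-((1/2) * Real.log N) * t) / t := rfl
  rw [hE]
  have hsqpos : 0 < Real.sqrt N := Real.sqrt_pos.mpr hN0
  have hpow : N ^ (-(1/2) : ℝ) = (Real.sqrt N)⁻¹ := by
    rw [Real.rpow_neg hN0.le, Real.sqrt_eq_rpow]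
  rw [Gf, hpow]
  have hy : y = 1 / Real.log N := rfl
  rw [hy]
  congr 1
  field_simp
  ring
end

section
/- Let f(x) := 1/(x·log x) and E₁(u) := ∫_1^∞ e^{-ut}/t dt. For every real N ≥ 3, with y := 1/log N, one has ∫_N^∞ x^{5/2}·f'''(x) dx = -((33/4)y + (11/2)y² + 2y³)/√N - (15/8)·E₁((1/2)·log N). -/
open Real Set MeasureTheory Filter

noncomputable def fmain : ℝ → ℝ := fun x => 1 / (x * Real.log x)
noncomputable def gg1 : ℝ → ℝ := fun x => -((Real.log x + 1) / (x * Real.log x) ^ 2)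
noncomputable def gg2 : ℝ → ℝ := fun x =>
  (2 * (Real.log x) ^ 2 + 3 * Real.log x + 2) / (x * Real.log x) ^ 3
noncomputable def gg3 : ℝ → ℝ := fun x =>
  -((6 * (Real.log x) ^ 3 + 11 * (Real.log x) ^ 2 + 12 * Real.log x + 6) / (x * Real.log x) ^ 4)

lemma aux_ne {x : ℝ} (hx : 1 < x) : x ≠ 0 ∧ Real.log x ≠ 0 := by
  constructor
  · linarith
  · have := Real.log_pos hx; linarith

lemma hd1 {x : ℝ} (hx : 1 < x) : HasDerivAt fmain (gg1 x) x := by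
  obtain ⟨hx0, hl0⟩ := aux_ne hx
  have hu : HasDerivAt (fun x : ℝ => x * Real.log x) (Real.log x + 1) x := by
    have := (hasDerivAt_id x).mul (Real.hasDerivAt_log hx0)
    refine this.congr_deriv ?_
    simp only [id, one_mul, mul_inv_cancel₀ hx0]
  have hne : x * Real.log x ≠ 0 := mul_ne_zero hx0 hl0
  have := hu.inv hne
  have h2 : (fun x : ℝ => x * Real.log x)⁻¹ = fmain := by
    ext t; simp [fmain, one_div]
  rw [h2] at this
  refine this.congr_deriv ?_
  simp [gg1]
  ring

lemma hd2 {x : ℝ} (hx : 1 < x) : HasDerivAt gg1 (gg2 x) x := by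
  obtain ⟨hx0, hl0⟩ := aux_ne hx
  have hu : HasDerivAt (fun x : ℝ => x * Real.log x) (Real.log x + 1) x := by
    have := (hasDerivAt_id x).mul (Real.hasDerivAt_log hx0)
    refine this.congr_deriv ?_
    simp only [id, one_mul, mul_inv_cancel₀ hx0]
  have hne : x * Real.log x ≠ 0 := mul_ne_zero hx0 hl0
  have hnum : HasDerivAt (fun x : ℝ => Real.log x + 1) x⁻¹ x :=
    (Real.hasDerivAt_log hx0).add_const 1
  have hden : HasDerivAt (fun x : ℝ => (x * Real.log x) ^ 2)
      (2 * (x * Real.log x) ^ 1 * (Real.log x + 1)) x := hu.pow 2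
  have hq := hnum.div hden (pow_ne_zero 2 hne)
  have := hq.neg
  refine this.congr_deriv ?_
  simp only [gg2]
  field_simp
  ring

lemma hd3 {x : ℝ} (hx : 1 < x) : HasDerivAt gg2 (gg3 x) x := by
  obtain ⟨hx0, hl0⟩ := aux_ne hx
  have hu : HasDerivAt (fun x : ℝ => x * Real.log x) (Real.log x + 1) x := by
    have := (hasDerivAt_id x).mul (Real.hasDerivAt_log hx0)
    refine this.congr_deriv ?_
    simp only [id, one_mul, mul_inv_cancel₀ hx0]
  have hne : x * Real.log x ≠ 0 := mul_ne_zero hx0 hl0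
  have hl : HasDerivAt Real.log x⁻¹ x := Real.hasDerivAt_log hx0
  have hnum : HasDerivAt (fun x : ℝ => 2 * (Real.log x) ^ 2 + 3 * Real.log x + 2)
      (2 * (2 * (Real.log x) ^ 1 * x⁻¹) + 3 * x⁻¹) x := by
    exact (((hl.pow 2).const_mul 2).add (hl.const_mul 3)).add_const 2
  have hden : HasDerivAt (fun x : ℝ => (x * Real.log x) ^ 3)
      (3 * (x * Real.log x) ^ 2 * (Real.log x + 1)) x := hu.pow 3
  have hq := hnum.div hden (pow_ne_zero 3 hne)
  refine hq.congr_deriv ?_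
  simp only [gg3]
  field_simp
  ring

lemma deriv3_eq {x : ℝ} (hx : 1 < x) : deriv (deriv (deriv fmain)) x = gg3 x := by
  have hmem : Ioi (1:ℝ) ∈ nhds x := Ioi_mem_nhds hx
  have e1 : deriv fmain =ᶠ[nhds x] gg1 := by
    filter_upwards [hmem] with y hy
    exact (hd1 hy).deriv
  have e2 : deriv (deriv fmain) =ᶠ[nhds x] gg2 := by
    filter_upwards [hmem] with y hy
    have hmem' : Ioi (1:ℝ) ∈ nhds y := Ioi_mem_nhds hy
    have e1' : deriv fmain =ᶠ[nhds y] gg1 := by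
      filter_upwards [hmem'] with z hz
      exact (hd1 hz).deriv
    rw [e1'.deriv_eq, (hd2 hy).deriv]
  rw [e2.deriv_eq, (hd3 hx).deriv]

noncomputable def PP : ℝ → ℝ := fun x => x ^ (-(1/2) : ℝ) *
  ((33/4) / Real.log x + (11/2) / (Real.log x) ^ 2 + 2 / (Real.log x) ^ 3)
noncomputable def PPd : ℝ → ℝ := fun x => x ^ (-(3/2) : ℝ) *
  (-((33/8) / Real.log x + 11 / (Real.log x) ^ 2 + 12 / (Real.log x) ^ 3 + 6 / (Real.log x) ^ 4))

lemma hdP {x : ℝ} (hx : 1 < x) : HasDerivAt PP (PPd x) x := by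
  have hx0 : (0:ℝ) < x := by linarith
  have hl0 : Real.log x ≠ 0 := by have := Real.log_pos hx; linarith
  have hl : HasDerivAt Real.log x⁻¹ x := Real.hasDerivAt_log (ne_of_gt hx0)
  have hr : HasDerivAt (fun x : ℝ => x ^ (-(1/2) : ℝ))
      ((-(1/2)) * x ^ (-(1/2) - 1 : ℝ)) x :=
    Real.hasDerivAt_rpow_const (Or.inl (ne_of_gt hx0))
  have hS : HasDerivAt (fun x : ℝ =>
      (33/4) / Real.log x + (11/2) / (Real.log x) ^ 2 + 2 / (Real.log x) ^ 3)
      ((-((33/4) * x⁻¹ / (Real.log x) ^ 2)) + (-((11/2) * (2 * (Real.log x) ^ 1 * x⁻¹) / ((Real.log x) ^ 2) ^ 2))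
        + (-(2 * (3 * (Real.log x) ^ 2 * x⁻¹) / ((Real.log x) ^ 3) ^ 2))) x := by
    have h1 := ((hasDerivAt_const x (33/4:ℝ)).div hl hl0)
    have h2 := ((hasDerivAt_const x (11/2:ℝ)).div (hl.pow 2) (pow_ne_zero 2 hl0))
    have h3 := ((hasDerivAt_const x (2:ℝ)).div (hl.pow 3) (pow_ne_zero 3 hl0))
    refine ((h1.add h2).add h3).congr_deriv ?_
    simp only [Pi.pow_apply]
    ring
  have := hr.mul hS
  refine this.congr_deriv ?_
  have hsplit : x ^ (-(3/2) : ℝ) = x ^ (-(1/2) : ℝ) * x⁻¹ := by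
    rw [← Real.rpow_neg_one x, ← Real.rpow_add hx0]; norm_num
  have hsplit2 : x ^ (-(1/2) - 1 : ℝ) = x ^ (-(1/2) : ℝ) * x⁻¹ := by
    rw [← Real.rpow_neg_one x, ← Real.rpow_add hx0]; norm_num
  simp only [PPd, hsplit, hsplit2]
  field_simp
  ring

lemma point_eq {x : ℝ} (hx : 1 < x) :
    x ^ ((5:ℝ)/2) * gg3 x = PPd x - (15/8) * (x ^ (-(3/2) : ℝ) / Real.log x) := by
  have hx0 : (0:ℝ) < x := by linarith
  have hl0 : Real.log x ≠ 0 := by have := Real.log_pos hx; linarith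
  have h4 : x ^ ((5:ℝ)/2) = x ^ (-(3/2) : ℝ) * x ^ 4 := by
    rw [← Real.rpow_natCast x 4, ← Real.rpow_add hx0]; norm_num
  simp only [gg3, PPd, h4]
  field_simp
  ring

lemma logN_gt {N : ℝ} (hN : 3 ≤ N) : 1 < Real.log N := by
  rw [Real.lt_log_iff_exp_lt (by linarith)]
  have := Real.exp_one_lt_d9
  linarith

lemma tendsto_PP : Tendsto PP atTop (nhds 0) := by
  have h1 : Tendsto (fun x : ℝ => x ^ (-(1/2) : ℝ)) atTop (nhds 0) :=
    tendsto_rpow_neg_atTop (by norm_num)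
  have hlog := Real.tendsto_log_atTop
  have h2 : Tendsto (fun x : ℝ =>
      (33/4) / Real.log x + (11/2) / (Real.log x) ^ 2 + 2 / (Real.log x) ^ 3) atTop
      (nhds 0) := by
    have a1 : Tendsto (fun x : ℝ => (33/4) / Real.log x) atTop (nhds 0) :=
      tendsto_const_nhds.div_atTop hlog
    have a2 : Tendsto (fun x : ℝ => (11/2) / (Real.log x) ^ 2) atTop (nhds 0) :=
      tendsto_const_nhds.div_atTop ((tendsto_pow_atTop (by norm_num)).comp hlog)
    have a3 : Tendsto (fun x : ℝ => 2 / (Real.log x) ^ 3) atTop (nhds 0) :=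
      tendsto_const_nhds.div_atTop ((tendsto_pow_atTop (by norm_num)).comp hlog)
    simpa using (a1.add a2).add a3
  have := h1.mul h2
  rw [mul_zero] at this
  exact this

lemma integ_aux {N : ℝ} (hN : 3 ≤ N) {h : ℝ → ℝ} (hc : ContinuousOn h (Ioi N))
    (hb : ∀ x ∈ Ioi N, |h x| ≤ 64 * x ^ (-(3/2) : ℝ)) :
    IntegrableOn h (Ioi N) := by
  have hint : IntegrableOn (fun x : ℝ => 64 * x ^ (-(3/2) : ℝ)) (Ioi N) :=
    (integrableOn_Ioi_rpow_of_lt (by norm_num) (by linarith : (0:ℝ) < N)).const_mul 64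
  refine hint.mono' (hc.aestronglyMeasurable measurableSet_Ioi) ?_
  filter_upwards [ae_restrict_mem measurableSet_Ioi] with x hx
  simpa [abs_of_nonneg] using hb x hx

lemma log_gt_on {N x : ℝ} (hN : 3 ≤ N) (hx : x ∈ Ioi N) : 1 < Real.log x := by
  have hx1 : N < x := hx
  have hx0 : (0:ℝ) < x := by linarith
  have : Real.exp 1 < x := by
    have := Real.exp_one_lt_d9
    linarith
  rwa [← Real.lt_log_iff_exp_lt hx0] at this

lemma cov {N : ℝ} (hN : 3 ≤ N) :
    (∫ x in Ioi N, x ^ (-(3/2) : ℝ) / Real.log x)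
      = ∫ t in Ioi (1:ℝ), Real.exp (-(1/2 * Real.log N) * t) / t := by
  have hL := logN_gt hN
  have hL0 : (0:ℝ) < Real.log N := by linarith
  set L := Real.log N with hLdef
  set φ : ℝ → ℝ := fun t => Real.exp (t * L) with hφ
  set g : ℝ → ℝ := fun x => x ^ (-(3/2) : ℝ) / Real.log x with hg
  have hφd : ∀ t : ℝ, HasDerivAt φ (Real.exp (t * L) * L) t := by
    intro t
    have := ((hasDerivAt_id t).mul_const L).exp
    simpa using this
  have himg1 : φ '' Ioi 1 ⊆ Ioi N := by
    rintro _ ⟨t, ht, rfl⟩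
    simp only [hφ, mem_Ioi]
    calc N = Real.exp L := by rw [hLdef, Real.exp_log (by linarith)]
    _ < Real.exp (t * L) := Real.exp_lt_exp.mpr (by have := mem_Ioi.mp ht; nlinarith)
  have himg2 : φ '' Ici 1 ⊆ Ici N := by
    rintro _ ⟨t, ht, rfl⟩
    simp only [hφ, mem_Ici]
    calc N = Real.exp L := by rw [hLdef, Real.exp_log (by linarith)]
    _ ≤ Real.exp (t * L) := Real.exp_le_exp.mpr (by have := mem_Ici.mp ht; nlinarith)
  have hgcont : ContinuousOn g (Ioi N) := by
    intro x hx
    have hx0 : (0:ℝ) < x := lt_trans (by linarith) (mem_Ioi.mp hx)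
    have hlx : Real.log x ≠ 0 := by
      have : (1:ℝ) < x := by have := mem_Ioi.mp hx; linarith
      have := Real.log_pos this; linarith
    exact ((Real.continuousAt_rpow_const x _ (Or.inl (ne_of_gt hx0))).div
      (Real.continuousAt_log (ne_of_gt hx0)) hlx).continuousWithinAt
  have hgint : IntegrableOn g (Ioi N) := by
    have hint : IntegrableOn (fun x : ℝ => x ^ (-(3/2) : ℝ)) (Ioi N) :=
      integrableOn_Ioi_rpow_of_lt (by norm_num) (by linarith)
    refine hint.mono' (hgcont.aestronglyMeasurable measurableSet_Ioi) ?_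
    filter_upwards [ae_restrict_mem measurableSet_Ioi] with x hx
    have hx1 : (1:ℝ) < x := by have := mem_Ioi.mp hx; linarith
    have hx0 : (0:ℝ) < x := by linarith
    have hlx : 1 < Real.log x := log_gt_on hN hx
    have hr0 : (0:ℝ) < x ^ (-(3/2) : ℝ) := Real.rpow_pos_of_pos hx0 _
    rw [hg]
    simp only [Real.norm_eq_abs, abs_div, abs_of_pos hr0,
      abs_of_pos (by linarith : (0:ℝ) < Real.log x)]
    rw [div_le_iff₀ (by linarith)]
    nlinarith
  have hgintIci : IntegrableOn g (Ici N) :=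
    (integrableOn_Ici_iff_integrableOn_Ioi).mpr hgint
  have hpt : ∀ t : ℝ, t ∈ Ici (1:ℝ) →
      (g ∘ φ) t * (Real.exp (t * L) * L) = Real.exp (-(1/2 * L) * t) / t := by
    intro t ht
    have ht0 : (0:ℝ) < t := lt_of_lt_of_le one_pos ht
    simp only [hg, hφ, Function.comp]
    rw [Real.rpow_def_of_pos (Real.exp_pos _), Real.log_exp]
    have h1 : Real.exp (t * L * -(3/2)) * Real.exp (t * L) = Real.exp (-(1/2 * L) * t) := by
      rw [← Real.exp_add]; congr 1; ring
    calc Real.exp (t * L * -(3/2)) / (t * L) * (Real.exp (t * L) * L)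
        = Real.exp (t * L * -(3/2)) * Real.exp (t * L) * (L / (t * L)) := by ring
      _ = Real.exp (-(1/2 * L) * t) * (1 / t) := by
          rw [h1]; congr 1; rw [div_eq_div_iff (by positivity) (ne_of_gt ht0)]; ring
      _ = Real.exp (-(1/2 * L) * t) / t := by ring
  have hkint : IntegrableOn (fun t : ℝ => Real.exp (-(1/2 * L) * t) / t) (Ici 1) := by
    rw [integrableOn_Ici_iff_integrableOn_Ioi]
    have hint : IntegrableOn (fun t : ℝ => Real.exp (-(L/2) * t)) (Ioi 1) :=
      exp_neg_integrableOn_Ioi 1 (by linarith)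
    refine hint.mono' ?_ ?_
    · apply ContinuousOn.aestronglyMeasurable ?_ measurableSet_Ioi
      intro t ht
      have ht0 : t ≠ 0 := by have := mem_Ioi.mp ht; positivity
      exact (Real.continuous_exp.comp (by fun_prop)).continuousWithinAt.div
        continuousWithinAt_id ht0
    · filter_upwards [ae_restrict_mem measurableSet_Ioi] with t ht
      have ht1 : (1:ℝ) < t := mem_Ioi.mp ht
      have h1 : (0:ℝ) < Real.exp (-(1/2 * L) * t) := Real.exp_pos _
      rw [Real.norm_eq_abs, abs_div, abs_of_pos h1, abs_of_pos (by linarith)]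
      rw [div_le_iff₀ (by linarith)]
      have : Real.exp (-(1/2*L)*t) = Real.exp (-(L/2)*t) := by ring_nf
      rw [this]
      nlinarith [Real.exp_pos (-(L/2)*t)]
  have hg2 : IntegrableOn (fun t : ℝ => (g ∘ φ) t * (Real.exp (t * L) * L)) (Ici 1) :=
    hkint.congr_fun (fun t ht => (hpt t ht).symm) measurableSet_Ici
  have key := MeasureTheory.integral_comp_mul_deriv_Ioi
    (f := φ) (f' := fun t => Real.exp (t * L) * L) (g := g) (a := 1)
    (by fun_prop)
    (by
      apply Real.tendsto_exp_atTop.comp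
      exact Tendsto.atTop_mul_const hL0 tendsto_id)
    (fun t ht => (hφd t).hasDerivWithinAt)
    (hgcont.mono himg1)
    (hgintIci.mono_set himg2)
    hg2
  have hφ1 : φ 1 = N := by
    simp only [hφ, one_mul]
    rw [hLdef, Real.exp_log (by linarith)]
  rw [hφ1] at key
  have e0 : (∫ x in Ioi N, x ^ (-(3/2) : ℝ) / Real.log x) = ∫ x in Ioi N, g x := rfl
  rw [e0, ← key]
  apply MeasureTheory.setIntegral_congr_fun measurableSet_Ioi
  intro t ht
  exact hpt t (le_of_lt (mem_Ioi.mp ht))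

theorem stmt_16 (N : ℝ) (hN : 3 ≤ N) :
    let f : ℝ → ℝ := fun x => 1 / (x * Real.log x)
    let E₁ : ℝ → ℝ := fun u => ∫ t in Set.Ioi (1 : ℝ), Real.exp (-u * t) / t
    let y : ℝ := 1 / Real.log N
    (∫ x in Set.Ioi N, x ^ ((5 : ℝ) / 2) * deriv (deriv (deriv f)) x)
      = -((33 / 4) * y + (11 / 2) * y ^ 2 + 2 * y ^ 3) / Real.sqrt N
        - (15 / 8) * E₁ ((1 / 2) * Real.log N) := by
  intro f E₁ y
  have hL := logN_gt hN
  have hL0 : Real.log N ≠ 0 := by linarith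
  have hN0 : (0:ℝ) < N := by linarith
  -- 1: rewrite integrand
  have step1 : (∫ x in Set.Ioi N, x ^ ((5 : ℝ) / 2) * deriv (deriv (deriv f)) x)
      = ∫ x in Set.Ioi N, (PPd x - (15/8) * (x ^ (-(3/2) : ℝ) / Real.log x)) := by
    apply MeasureTheory.setIntegral_congr_fun measurableSet_Ioi
    intro x hx
    have hx1 : 1 < x := by have := mem_Ioi.mp hx; linarith
    have hf : f = fmain := rfl
    show x ^ ((5:ℝ)/2) * deriv (deriv (deriv f)) x
      = PPd x - (15/8) * (x ^ (-(3/2) : ℝ) / Real.log x)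
    rw [hf, deriv3_eq hx1]
    exact point_eq hx1
  -- integrability
  have hPPdcont : ContinuousOn PPd (Ioi N) := by
    intro x hx
    have hx1 : 1 < x := by have := mem_Ioi.mp hx; linarith
    have hx0 : (0:ℝ) < x := by linarith
    have hlx : Real.log x ≠ 0 := by have := Real.log_pos hx1; linarith
    apply ContinuousWithinAt.mul
    · exact (Real.continuousAt_rpow_const x _ (Or.inl (ne_of_gt hx0))).continuousWithinAt
    · have hclog : ContinuousWithinAt Real.log (Ioi N) x :=
        (Real.continuousAt_log (ne_of_gt hx0)).continuousWithinAt
      apply ContinuousWithinAt.neg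
      exact (((continuousWithinAt_const.div hclog hlx).add
        (continuousWithinAt_const.div (hclog.pow 2) (pow_ne_zero 2 hlx))).add
        (continuousWithinAt_const.div (hclog.pow 3) (pow_ne_zero 3 hlx))).add
        (continuousWithinAt_const.div (hclog.pow 4) (pow_ne_zero 4 hlx))
  have hPPdint : IntegrableOn PPd (Ioi N) := by
    apply integ_aux hN hPPdcont
    intro x hx
    have hx1 : 1 < x := by have := mem_Ioi.mp hx; linarith
    have hx0 : (0:ℝ) < x := by linarith
    have hlx : 1 < Real.log x := log_gt_on hN hx
    have hr0 : (0:ℝ) < x ^ (-(3/2) : ℝ) := Real.rpow_pos_of_pos hx0 _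
    simp only [PPd, abs_mul, abs_of_pos hr0]
    have hb : |(-((33/8) / Real.log x + 11 / (Real.log x) ^ 2 + 12 / (Real.log x) ^ 3
        + 6 / (Real.log x) ^ 4))| ≤ 64 := by
      rw [abs_neg]
      have p1 : (0:ℝ) < Real.log x := by linarith
      have t1 : (33:ℝ)/8 / Real.log x ≤ 33/8 := by
        rw [div_le_iff₀ p1]; nlinarith
      have t2 : (11:ℝ) / (Real.log x) ^ 2 ≤ 11 := by
        rw [div_le_iff₀ (by positivity)]; nlinarith
      have t3 : (12:ℝ) / (Real.log x) ^ 3 ≤ 12 := by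
        rw [div_le_iff₀ (by positivity)]; nlinarith
      have t4 : (6:ℝ) / (Real.log x) ^ 4 ≤ 6 := by
        rw [div_le_iff₀ (by positivity)]
        nlinarith [one_le_pow₀ (le_of_lt hlx) (n := 4)]
      have p2 : (0:ℝ) ≤ (33/8) / Real.log x + 11 / (Real.log x) ^ 2 + 12 / (Real.log x) ^ 3
          + 6 / (Real.log x) ^ 4 := by positivity
      rw [abs_of_nonneg p2]
      linarith
    calc x ^ (-(3/2) : ℝ) * |(-((33/8) / Real.log x + 11 / (Real.log x) ^ 2
          + 12 / (Real.log x) ^ 3 + 6 / (Real.log x) ^ 4))|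
        ≤ x ^ (-(3/2) : ℝ) * 64 := by nlinarith [abs_nonneg (-((33/8) / Real.log x + 11 / (Real.log x) ^ 2 + 12 / (Real.log x) ^ 3 + 6 / (Real.log x) ^ 4))]
      _ = 64 * x ^ (-(3/2) : ℝ) := by ring
  have hhcont : ContinuousOn (fun x : ℝ => x ^ (-(3/2) : ℝ) / Real.log x) (Ioi N) := by
    intro x hx
    have hx0 : (0:ℝ) < x := lt_trans (by linarith) (mem_Ioi.mp hx)
    have hlx : Real.log x ≠ 0 := by
      have : (1:ℝ) < x := by have := mem_Ioi.mp hx; linarith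
      have := Real.log_pos this; linarith
    exact ((Real.continuousAt_rpow_const x _ (Or.inl (ne_of_gt hx0))).div
      (Real.continuousAt_log (ne_of_gt hx0)) hlx).continuousWithinAt
  have hhint : IntegrableOn (fun x : ℝ => x ^ (-(3/2) : ℝ) / Real.log x) (Ioi N) := by
    apply integ_aux hN hhcont
    intro x hx
    have hx0 : (0:ℝ) < x := lt_trans (by linarith) (mem_Ioi.mp hx)
    have hlx : 1 < Real.log x := log_gt_on hN hx
    have hr0 : (0:ℝ) < x ^ (-(3/2) : ℝ) := Real.rpow_pos_of_pos hx0 _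
    rw [abs_div, abs_of_pos hr0, abs_of_pos (by linarith : (0:ℝ) < Real.log x)]
    rw [div_le_iff₀ (by linarith)]
    nlinarith
  -- split the integral
  have step2 : (∫ x in Set.Ioi N, (PPd x - (15/8) * (x ^ (-(3/2) : ℝ) / Real.log x)))
      = (∫ x in Set.Ioi N, PPd x)
        - (15/8) * ∫ x in Set.Ioi N, x ^ (-(3/2) : ℝ) / Real.log x := by
    rw [MeasureTheory.integral_sub hPPdint (hhint.const_mul (15/8))]
    rw [MeasureTheory.integral_const_mul]
  -- FTC for PPd
  have step3 : (∫ x in Set.Ioi N, PPd x) = 0 - PP N := by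
    apply MeasureTheory.integral_Ioi_of_hasDerivAt_of_tendsto' ?_ hPPdint tendsto_PP
    intro x hx
    have hx1 : 1 < x := by have := mem_Ici.mp hx; linarith
    exact hdP hx1
  -- E₁ identification
  have step4 : (∫ x in Set.Ioi N, x ^ (-(3/2) : ℝ) / Real.log x)
      = E₁ ((1 / 2) * Real.log N) := by
    rw [cov hN]
  rw [step1, step2, step3, step4]
  -- final algebra
  have hsq : Real.sqrt N = N ^ ((1:ℝ)/2) := Real.sqrt_eq_rpow N
  have hsq0 : (0:ℝ) < Real.sqrt N := Real.sqrt_pos.mpr hN0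
  have hPPN : PP N = ((33 / 4) * y + (11 / 2) * y ^ 2 + 2 * y ^ 3) / Real.sqrt N := by
    have hneg : N ^ (-(1/2) : ℝ) = (Real.sqrt N)⁻¹ := by
      rw [hsq, ← Real.rpow_neg (le_of_lt hN0)]
    simp only [PP, hneg]
    have hy : y = 1 / Real.log N := rfl
    rw [hy, eq_div_iff (ne_of_gt hsq0)]
    field_simp
  rw [hPPN]
  ring
end
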